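/- If c is a vertex of the optimal-solution polytope of the linear program max 1^T c subject to Zc ≤ x, c ≥ 0 (with x a positive integer vector), then y = Zc is integer valued. -/

import Mathlib

open Finset

noncomputable def Zent {q m : ℕ} (ep : Fin m → Fin q × Fin q) (j : Fin q) (e : Fin m) : ℝ :=
  ((if (ep e).1 = j then (1 : ℝ) else 0) + (if (ep e).2 = j then (1 : ℝ) else 0)) / 2

lemma Zent_col_sum {q m : ℕ} (ep : Fin m → Fin q × Fin q) (e : Fin m) :
    ∑ j, Zent ep j e = 1 := by
  unfold Zent
  rw [← Finset.sum_div, Finset.sum_add_distrib, Finset.sum_ite_eq, Finset.sum_ite_eq]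
  simp

lemma Zent_pair {q m : ℕ} (ep : Fin m → Fin q × Fin q) (e : Fin m) (w : Fin q → ℝ) :
    ∑ j, w j * Zent ep j e = (w (ep e).1 + w (ep e).2) / 2 := by
  have h : ∀ x : Fin q, w x * Zent ep x e
      = ((if (ep e).1 = x then w x else 0) + (if (ep e).2 = x then w x else 0)) / 2 := by
    intro x
    unfold Zent
    by_cases h1 : (ep e).1 = x <;> by_cases h2 : (ep e).2 = x <;> simp [h1, h2] <;> ring
  rw [Finset.sum_congr rfl fun x _ => h x, ← Finset.sum_div, Finset.sum_add_distrib,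
    Finset.sum_ite_eq, Finset.sum_ite_eq]
  simp

lemma rowsum_total {q m : ℕ} (ep : Fin m → Fin q × Fin q) (d : Fin m → ℝ) :
    ∑ j, ∑ e, Zent ep j e * d e = ∑ e, d e := by
  rw [Finset.sum_comm]
  refine Finset.sum_congr rfl fun e _ => ?_
  rw [← Finset.sum_mul, Zent_col_sum, one_mul]

inductive YReach {q m : ℕ} (ep : Fin m → Fin q × Fin q) (c : Fin m → ℝ) (i0 : Fin q) :
    Fin q → Bool → Prop
  | base : YReach ep c i0 i0 false
  | step {u v : Fin q} {p : Bool} (e : Fin m) (h : YReach ep c i0 u p)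
      (hce : c e ≠ 0) (hep : ep e = (u, v) ∨ ep e = (v, u)) : YReach ep c i0 v (!p)

lemma yreach_comp {q m : ℕ} {ep : Fin m → Fin q × Fin q} {c : Fin m → ℝ} {i0 : Fin q}
    {v : Fin q} {p' : Bool} (h' : YReach ep c i0 v p') :
    ∀ p, YReach ep c i0 v p → YReach ep c i0 i0 (xor p p') := by
  induction h' with
  | base => intro p hp; simpa using hp
  | @step u v p0 e h hce hep ih =>
      intro p hp
      have h2 : YReach ep c i0 u (!p) := YReach.step e hp hce hep.symm
      have h3 := ih _ h2
      have : xor (!p) p0 = xor p (!p0) := by cases p <;> cases p0 <;> rfl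
      rwa [this] at h3

lemma yreach_dir {q m : ℕ} {ep : Fin m → Fin q × Fin q} {c : Fin m → ℝ} {i0 : Fin q}
    {v : Fin q} {p : Bool} (h : YReach ep c i0 v p) :
    ∃ d : Fin m → ℝ, (∀ e, d e ≠ 0 → c e ≠ 0) ∧
      ∀ j, ∑ e, Zent ep j e * d e
        = ((if j = i0 then (1 : ℝ) else 0)
            + (if p then (1 : ℝ) else -1) * (if j = v then (1 : ℝ) else 0)) / 2 := by
  induction h with
  | base =>
      refine ⟨0, by simp, fun j => ?_⟩
      by_cases hj : j = i0 <;> simp [hj]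
  | @step u v p e h hce hep ih =>
      obtain ⟨d, hsupp, hZ⟩ := ih
      set t : ℝ := if p then -1 else 1 with ht
      refine ⟨fun f => d f + (if f = e then t else 0), ?_, ?_⟩
      · intro f hf
        by_cases hfe : f = e
        · rwa [hfe]
        · exact hsupp f (by simpa [hfe] using hf)
      · intro j
        have hsplit : ∑ f, Zent ep j f * (d f + (if f = e then t else 0))
            = (∑ f, Zent ep j f * d f) + Zent ep j e * t := by
          rw [show (∑ f, Zent ep j f * (d f + (if f = e then t else 0)))
              = ∑ f, (Zent ep j f * d f + (if f = e then Zent ep j f * t else 0)) from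
            Finset.sum_congr rfl fun f _ => by by_cases hfe : f = e <;> simp [hfe, mul_add]]
          rw [Finset.sum_add_distrib, Finset.sum_ite_eq']
          simp
        rw [hsplit, hZ j]
        have huv : (ep e).1 = u ∧ (ep e).2 = v ∨ (ep e).1 = v ∧ (ep e).2 = u := by
          rcases hep with h1 | h1 <;> [left; right] <;> simp [h1]
        have flip : ∀ a : Fin q, (if a = j then (1 : ℝ) else 0) = (if j = a then 1 else 0) := by
          intro a
          by_cases h : a = j
          · simp [h]
          · simp [h, Ne.symm h]
        unfold Zent
        rcases huv with ⟨h1, h2⟩ | ⟨h1, h2⟩ <;> rw [h1, h2] <;> rw [flip u, flip v] <;>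
          rcases eq_or_ne j u with hju | hju <;> rcases eq_or_ne j v with hjv | hjv <;>
            cases p <;> simp [hju, hjv, ht] <;> split_ifs <;> ring

/-- If `c` is a vertex (extreme point) of the polytope of optimal solutions of the LP
`max 1ᵀc s.t. Zc ≤ x, c ≥ 0` (with `x` a positive integer vector), then `y = Zc`
is integer valued. -/
theorem y_of_vertex_is_integral
    (q m : ℕ) (ep : Fin m → Fin q × Fin q) (x : Fin q → ℕ) (hx : ∀ i, 0 < x i)
    (c : Fin m → ℝ)
    (hc : c ∈ Set.extremePoints ℝ
      {c : Fin m → ℝ |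
        ((∀ e, 0 ≤ c e) ∧
          ∀ i, ∑ e, ((if (ep e).1 = i then (1 : ℝ) else 0)
            + (if (ep e).2 = i then (1 : ℝ) else 0)) / 2 * c e ≤ (x i : ℝ)) ∧
        ∀ c' : Fin m → ℝ, (∀ e, 0 ≤ c' e) →
          (∀ i, ∑ e, ((if (ep e).1 = i then (1 : ℝ) else 0)
            + (if (ep e).2 = i then (1 : ℝ) else 0)) / 2 * c' e ≤ (x i : ℝ)) →
          ∑ e, c' e ≤ ∑ e, c e}) :
    ∀ i, ∃ n : ℤ,
      ∑ e, ((if (ep e).1 = i then (1 : ℝ) else 0)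
        + (if (ep e).2 = i then (1 : ℝ) else 0)) / 2 * c e = (n : ℝ) := by
  classical
  obtain ⟨⟨⟨hpos, hfeas⟩, hopt⟩, hext⟩ := hc
  have hfeas' : ∀ j, (∑ e, Zent ep j e * c e) ≤ (x j : ℝ) := hfeas
  have hopt' : ∀ c' : Fin m → ℝ, (∀ e, 0 ≤ c' e) →
      (∀ j, (∑ e, Zent ep j e * c' e) ≤ (x j : ℝ)) → ∑ e, c' e ≤ ∑ e, c e := hopt
  intro i
  show ∃ n : ℤ, (∑ e, Zent ep i e * c e) = (n : ℝ)
  -- Key lemma: no nonzero direction supported in supp c with vanishing row sums at tight vertices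
  have keyC : ∀ d : Fin m → ℝ, (∀ e, d e ≠ 0 → c e ≠ 0) →
      (∀ j, (∑ e, Zent ep j e * c e) = (x j : ℝ) → (∑ e, Zent ep j e * d e) = 0) →
      d ≠ 0 → False := by
    intro d hsupp htight hdne
    haveI : Nonempty (Fin m ⊕ Fin q) := ⟨Sum.inr i⟩
    set g : Fin q → ℝ := fun j => ∑ e, Zent ep j e * d e with hg
    set h : Fin m ⊕ Fin q → ℝ := fun a =>
      match a with
      | Sum.inl e => if d e = 0 then 1 else c e / |d e|
      | Sum.inr j => if g j = 0 then 1 else ((x j : ℝ) - ∑ e, Zent ep j e * c e) / |g j|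
      with hh
    have hhpos : ∀ a, 0 < h a := by
      rintro (e | j)
      · by_cases hde : d e = 0
        · simp [hh, hde]
        · have hce := hsupp e hde
          have hcp : 0 < c e := lt_of_le_of_ne (hpos e) (Ne.symm hce)
          simpa [hh, hde] using div_pos hcp (abs_pos.mpr hde)
      · by_cases hgj : g j = 0
        · simp [hh, hgj]
        · have hne : (∑ e, Zent ep j e * c e) ≠ (x j : ℝ) := fun hco => hgj (htight j hco)
          have hlt : (∑ e, Zent ep j e * c e) < (x j : ℝ) := lt_of_le_of_ne (hfeas' j) hne
          have hgt : (0:ℝ) < (x j : ℝ) - ∑ e, Zent ep j e * c e := by linarith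
          simpa [hh, hgj] using div_pos hgt (abs_pos.mpr hgj)
    set ε : ℝ := Finset.univ.inf' Finset.univ_nonempty h with hε
    have hεpos : 0 < ε := (Finset.lt_inf'_iff _).2 fun a _ => hhpos a
    have hεle : ∀ a, ε ≤ h a := fun a => Finset.inf'_le _ (Finset.mem_univ a)
    have hce_bound : ∀ e, |ε * d e| ≤ c e := by
      intro e
      by_cases hde : d e = 0
      · simpa [hde] using hpos e
      · have h1 : ε ≤ c e / |d e| := by simpa [hh, hde] using hεle (Sum.inl e)
        rw [abs_mul, abs_of_pos hεpos]
        calc ε * |d e| ≤ (c e / |d e|) * |d e| :=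
              mul_le_mul_of_nonneg_right h1 (abs_nonneg _)
          _ = c e := div_mul_cancel₀ _ (abs_ne_zero.mpr hde)
    have hg_bound : ∀ j, |ε * g j| ≤ (x j : ℝ) - ∑ e, Zent ep j e * c e := by
      intro j
      by_cases hgj : g j = 0
      · have := hfeas' j
        simp [hgj]
        linarith
      · have h1 : ε ≤ ((x j : ℝ) - ∑ e, Zent ep j e * c e) / |g j| := by
          simpa [hh, hgj] using hεle (Sum.inr j)
        rw [abs_mul, abs_of_pos hεpos]
        calc ε * |g j| ≤ (((x j : ℝ) - ∑ e, Zent ep j e * c e) / |g j|) * |g j| :=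
              mul_le_mul_of_nonneg_right h1 (abs_nonneg _)
          _ = _ := div_mul_cancel₀ _ (abs_ne_zero.mpr hgj)
    have expand : ∀ (t : ℝ) (j : Fin q),
        (∑ e, Zent ep j e * (c e + t * d e)) = (∑ e, Zent ep j e * c e) + t * g j := by
      intro t j
      rw [hg, Finset.mul_sum, ← Finset.sum_add_distrib]
      exact Finset.sum_congr rfl fun e _ => by ring
    have hfeas2 : ∀ (t : ℝ), |t| ≤ ε → ((∀ e, 0 ≤ c e + t * d e) ∧
        ∀ j, (∑ e, Zent ep j e * (c e + t * d e)) ≤ (x j : ℝ)) := by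
      intro t ht
      constructor
      · intro e
        have h1 : |t * d e| ≤ |ε * d e| := by
          rw [abs_mul, abs_mul, abs_of_pos hεpos]
          exact mul_le_mul_of_nonneg_right ht (abs_nonneg _)
        have h2 := (abs_le.mp (h1.trans (hce_bound e))).1
        linarith
      · intro j
        rw [expand]
        have h1 : |t * g j| ≤ |ε * g j| := by
          rw [abs_mul, abs_mul, abs_of_pos hεpos]
          exact mul_le_mul_of_nonneg_right ht (abs_nonneg _)
        have h2 := (abs_le.mp (h1.trans (hg_bound j))).2
        linarith
    have hsum : ∀ (t : ℝ), (∑ e, (c e + t * d e)) = (∑ e, c e) + t * ∑ e, d e := by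
      intro t
      rw [Finset.mul_sum, ← Finset.sum_add_distrib]
    rcases lt_trichotomy (∑ e, d e) 0 with hS | hS | hS
    · have hf := hfeas2 (-ε) (by rw [abs_neg, abs_of_pos hεpos])
      have hle := hopt' _ hf.1 hf.2
      rw [hsum] at hle
      nlinarith
    · -- sum zero: contradict extremality
      have hf1 := hfeas2 (-ε) (by rw [abs_neg, abs_of_pos hεpos])
      have hf2 := hfeas2 ε (le_of_eq (abs_of_pos hεpos))
      have hsum1 : (∑ e, (c e + (-ε) * d e)) = ∑ e, c e := by rw [hsum, hS]; ring
      have hsum2 : (∑ e, (c e + ε * d e)) = ∑ e, c e := by rw [hsum, hS]; ring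
      have hm1 : (fun e => c e + (-ε) * d e) ∈
          {c₀ : Fin m → ℝ |
            ((∀ e, 0 ≤ c₀ e) ∧
              ∀ i, ∑ e, ((if (ep e).1 = i then (1 : ℝ) else 0)
                + (if (ep e).2 = i then (1 : ℝ) else 0)) / 2 * c₀ e ≤ (x i : ℝ)) ∧
            ∀ c' : Fin m → ℝ, (∀ e, 0 ≤ c' e) →
              (∀ i, ∑ e, ((if (ep e).1 = i then (1 : ℝ) else 0)
                + (if (ep e).2 = i then (1 : ℝ) else 0)) / 2 * c' e ≤ (x i : ℝ)) →
              ∑ e, c' e ≤ ∑ e, c₀ e} := by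
        refine ⟨⟨hf1.1, hf1.2⟩, fun c' h1 h2 => ?_⟩
        show ∑ e, c' e ≤ ∑ e, (c e + (-ε) * d e)
        rw [hsum1]
        exact hopt c' h1 h2
      have hm2 : (fun e => c e + ε * d e) ∈
          {c₀ : Fin m → ℝ |
            ((∀ e, 0 ≤ c₀ e) ∧
              ∀ i, ∑ e, ((if (ep e).1 = i then (1 : ℝ) else 0)
                + (if (ep e).2 = i then (1 : ℝ) else 0)) / 2 * c₀ e ≤ (x i : ℝ)) ∧
            ∀ c' : Fin m → ℝ, (∀ e, 0 ≤ c' e) →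
              (∀ i, ∑ e, ((if (ep e).1 = i then (1 : ℝ) else 0)
                + (if (ep e).2 = i then (1 : ℝ) else 0)) / 2 * c' e ≤ (x i : ℝ)) →
              ∑ e, c' e ≤ ∑ e, c₀ e} := by
        refine ⟨⟨hf2.1, hf2.2⟩, fun c' h1 h2 => ?_⟩
        show ∑ e, c' e ≤ ∑ e, (c e + ε * d e)
        rw [hsum2]
        exact hopt c' h1 h2
      have hseg : c ∈ openSegment ℝ (fun e => c e + (-ε) * d e) (fun e => c e + ε * d e) := by
        refine ⟨1/2, 1/2, by norm_num, by norm_num, by norm_num, ?_⟩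
        funext e
        simp [Pi.smul_apply, smul_eq_mul]
        ring
      have hcontr := hext hm1 hm2 hseg
      apply hdne
      funext e
      have h1 := congrFun hcontr e
      have : (-ε) * d e = 0 := by linarith [h1]
      have := mul_eq_zero.mp this
      rcases this with h | h
      · exact absurd h (neg_ne_zero.mpr (ne_of_gt hεpos))
      · exact h
    · have hf := hfeas2 ε (le_of_eq (abs_of_pos hεpos))
      have hle := hopt' _ hf.1 hf.2
      rw [hsum] at hle
      nlinarith
  -- main case split: tight or slack
  by_cases htight : (∑ e, Zent ep i e * c e) = (x i : ℝ)
  · exact ⟨(x i : ℤ), by rw [htight]; push_cast; ring⟩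
  -- slack case
  have hA : ¬ YReach ep c i i true := by
    intro hR
    obtain ⟨d, hsupp, hZ⟩ := yreach_dir hR
    have hne : d ≠ 0 := by
      intro hd0
      have h1 := rowsum_total ep d
      have h2 : ∑ j, ∑ e, Zent ep j e * d e = ∑ j, ((if j = i then (1 : ℝ) else 0)
          + (if (true : Bool) then (1 : ℝ) else -1) * (if j = i then (1 : ℝ) else 0)) / 2 :=
        Finset.sum_congr rfl fun j _ => hZ j
      rw [h1] at h2
      rw [hd0] at h2
      simp [Finset.sum_div, Finset.sum_add_distrib, Finset.sum_ite_eq'] at h2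
    refine keyC d hsupp (fun j hj => ?_) hne
    have hji : j ≠ i := fun hh => htight (hh ▸ hj)
    rw [hZ j]
    simp [hji]
  have hex : ∀ j, YReach ep c i j false → YReach ep c i j true → False := by
    intro j h1 h2
    exact hA (by simpa using yreach_comp h1 true h2)
  have hB : ∀ (j : Fin q) (p : Bool), YReach ep c i j p → j ≠ i →
      (∑ e, Zent ep j e * c e) = (x j : ℝ) := by
    intro j p hR hji
    by_contra hslackj
    obtain ⟨d, hsupp, hZ⟩ := yreach_dir hR
    have hne : d ≠ 0 := by
      intro hd0
      have h2 := hZ i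
      rw [hd0] at h2
      revert h2
      cases p <;> simp [Ne.symm hji] <;> norm_num
    refine keyC d hsupp (fun k hk => ?_) hne
    have hki : k ≠ i := fun hh => htight (hh ▸ hk)
    have hkj : k ≠ j := fun hh => hslackj (hh ▸ hk)
    rw [hZ k]
    simp [hki, hkj]
  -- the potential w
  set w : Fin q → ℤ := fun j =>
    if YReach ep c i j false then 1 else if YReach ep c i j true then -1 else 0 with hw
  have hwi : w i = 1 := by simp [hw, YReach.base]
  have hwedge : ∀ e, c e ≠ 0 → (w (ep e).1) + (w (ep e).2) = 0 := by
    intro e hce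
    set u := (ep e).1
    set v := (ep e).2
    have hepe : ep e = (u, v) ∨ ep e = (v, u) := Or.inl rfl
    by_cases hu0 : YReach ep c i u false
    · have hv1 : YReach ep c i v true := YReach.step e hu0 hce hepe
      have hv0 : ¬ YReach ep c i v false := fun hh => hex v hh hv1
      simp [hw, hu0, hv0, hv1]
    · by_cases hu1 : YReach ep c i u true
      · have hv0 : YReach ep c i v false := by
          have := YReach.step e hu1 hce hepe
          simpa using this
        simp [hw, hu0, hu1, hv0]
      · have hv0 : ¬ YReach ep c i v false := by
          intro hh
          exact hu1 (by simpa using YReach.step e hh hce hepe.symm)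
        have hv1 : ¬ YReach ep c i v true := by
          intro hh
          exact hu0 (by simpa using YReach.step e hh hce hepe.symm)
        simp [hw, hu0, hu1, hv0, hv1]
  -- the vanishing pairing
  have hzero : ∑ j, ((w j : ℝ)) * (∑ e, Zent ep j e * c e) = 0 := by
    have h1 : ∀ j, ((w j : ℝ)) * (∑ e, Zent ep j e * c e)
        = ∑ e, ((w j : ℝ) * Zent ep j e) * c e := by
      intro j
      rw [Finset.mul_sum]
      exact Finset.sum_congr rfl fun e _ => by ring
    rw [Finset.sum_congr rfl fun j _ => h1 j, Finset.sum_comm]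
    refine Finset.sum_eq_zero fun e _ => ?_
    rw [← Finset.sum_mul, Zent_pair]
    by_cases hce : c e = 0
    · rw [hce, mul_zero]
    · have := hwedge e hce
      have hcast : ((w (ep e).1 : ℝ)) + (w (ep e).2) = 0 := by exact_mod_cast this
      rw [hcast]
      simp
  -- split off the i term
  have hsplit : ((w i : ℝ)) * (∑ e, Zent ep i e * c e)
      + ∑ j ∈ Finset.univ.erase i, ((w j : ℝ)) * (∑ e, Zent ep j e * c e) = 0 := by
    rw [Finset.add_sum_erase Finset.univ
      (fun j => ((w j : ℝ)) * (∑ e, Zent ep j e * c e)) (Finset.mem_univ i)]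
    exact hzero
  have herase : ∑ j ∈ Finset.univ.erase i, ((w j : ℝ)) * (∑ e, Zent ep j e * c e)
      = ∑ j ∈ Finset.univ.erase i, ((w j : ℝ)) * (x j : ℝ) := by
    refine Finset.sum_congr rfl fun j hj => ?_
    have hji : j ≠ i := Finset.ne_of_mem_erase hj
    by_cases h0 : YReach ep c i j false
    · rw [hB j false h0 hji]
    · by_cases h1 : YReach ep c i j true
      · rw [hB j true h1 hji]
      · simp [hw, h0, h1]
  refine ⟨-∑ j ∈ Finset.univ.erase i, (w j) * (x j : ℤ), ?_⟩
  rw [hwi] at hsplit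
  rw [herase] at hsplit
  push_cast
  push_cast at hsplit
  linarith
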